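/- Let L be a finitary first-order language that is relational (no function symbols and no constant symbols) and let φ be an L-sentence. If there exists a natural number n ≥ 1 such that ¬φ has no models of cardinality n (i.e., every L-structure with exactly n elements satisfies φ), then there is an L-sentence χ expressing θ(φ). -/

import Mathlib

/- STATEMENT 2: For a relational finitary first-order language L and an L-sentence φ,
if there is n ≥ 1 such that every L-structure with exactly n elements satisfies φ,
then θ(φ) is expressible by an L-sentence. -/

open FirstOrder Language Cardinal

universe u v

namespace ThetaAux

open FirstOrder.Language.BoundedFormula

variable {L : FirstOrder.Language.{u, v}}

/-- Substitute the last bound variable of a bounded formula by the free variable `i`. -/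
noncomputable def substLast {k m : ℕ} (i : Fin k) (ψ : L.BoundedFormula (Fin k) (m + 1)) :
    L.BoundedFormula (Fin k) m :=
  (BoundedFormula.relabel
    (Sum.elim Sum.inl
      (fun j : Fin (m + 1) => if h : (j : ℕ) < m then Sum.inr (⟨j, h⟩ : Fin m) else Sum.inl i))
    ψ.toFormula : L.BoundedFormula (Fin k) (m + 0))

theorem realize_substLast {M : Type*} [L.Structure M] {k m : ℕ} (i : Fin k)
    (ψ : L.BoundedFormula (Fin k) (m + 1)) (v : Fin k → M) (xs : Fin m → M) :
    (substLast i ψ).Realize v xs ↔ ψ.Realize v (Fin.snoc xs (v i)) := by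
  simp only [substLast, BoundedFormula.realize_relabel]
  rw [show (xs ∘ Fin.natAdd m : Fin 0 → M) = default from funext fun j => j.elim0]
  rw [show ∀ V : (Fin k ⊕ Fin (m+1)) → M,
      BoundedFormula.Realize ψ.toFormula V (default : Fin 0 → M) =
        (ψ.Realize (V ∘ Sum.inl) (V ∘ Sum.inr)) from
    fun V => propext (BoundedFormula.realize_toFormula ψ V)]
  constructor <;> intro H <;> convert H using 2 <;> funext j <;>
    simp only [Function.comp_apply, Sum.elim_inr, Sum.elim_inl] <;>
    by_cases hj : (j : ℕ) < m
  · simp [hj, Fin.snoc, Fin.castLT]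
  · have hjm : (j : ℕ) = m := by omega
    simp [hj, Fin.snoc]
  · simp [hj, Fin.snoc, Fin.castLT]
  · have hjm : (j : ℕ) = m := by omega
    simp [hj, Fin.snoc]

/-- Relativization of a bounded formula: quantifiers range only over the values of
the free variables `Fin k`. -/
noncomputable def relativize {k : ℕ} : ∀ {m : ℕ},
    L.BoundedFormula (Fin k) m → L.BoundedFormula (Fin k) m
  | _, falsum => falsum
  | _, equal t₁ t₂ => equal t₁ t₂
  | _, rel R ts => rel R ts
  | _, imp f₁ f₂ => (relativize f₁).imp (relativize f₂)
  | _, all f => BoundedFormula.iInf fun i => substLast i (relativize f)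

theorem realize_relativize {M : Type*} [L.Structure M] (S : L.Substructure M)
    {k : ℕ} (a : Fin k → S) (ha : Function.Surjective a)
    {m : ℕ} (ψ : L.BoundedFormula (Fin k) m) :
    ∀ xs : Fin m → S,
      (relativize ψ).Realize (fun i => (a i : M)) (fun j => (xs j : M)) ↔ ψ.Realize a xs := by
  induction ψ with
  | falsum => intro xs; exact Iff.rfl
  | equal t₁ t₂ =>
    intro xs
    have hcomp : (Sum.elim (fun i => (a i : M)) fun j => (xs j : M)) =
        (S.subtype : S → M) ∘ Sum.elim a xs := by
      funext x; cases x <;> rfl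
    show ((t₁.bdEqual t₂).Realize (fun i => (a i : M)) fun j => (xs j : M)) ↔
      (t₁.bdEqual t₂).Realize a xs
    simp only [realize_bdEqual, hcomp, Language.HomClass.realize_term]
    exact ⟨fun h => S.subtype.injective h, fun h => congrArg _ h⟩
  | rel R ts =>
    intro xs
    have hcomp : (Sum.elim (fun i => (a i : M)) fun j => (xs j : M)) =
        (S.subtype : S → M) ∘ Sum.elim a xs := by
      funext x; cases x <;> rfl
    show ((R.boundedFormula ts).Realize (fun i => (a i : M)) fun j => (xs j : M)) ↔
      (R.boundedFormula ts).Realize a xs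
    simp only [realize_rel, hcomp, Language.HomClass.realize_term]
    exact S.subtype.map_rel R _
  | imp f₁ f₂ ih₁ ih₂ =>
    intro xs
    simp only [relativize, realize_imp, ih₁, ih₂]
  | all f ih =>
    intro xs
    simp only [relativize, realize_iInf, Finset.mem_univ, true_implies, realize_all]
    have key : ∀ i : Fin k,
        ((relativize f).Realize (fun i => (a i : M))
            (Fin.snoc (α := fun _ => M) (fun j => (xs j : M)) ((a i : M))) ↔
          f.Realize a (Fin.snoc xs (a i))) := by
      intro i
      have h1 := ih (Fin.snoc xs (a i))
      have h2 : (Subtype.val ∘ (Fin.snoc xs (a i)) : Fin _ → M) =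
          Fin.snoc (α := fun _ => M) (Subtype.val ∘ xs) ((a i : M)) :=
        Fin.comp_snoc Subtype.val xs (a i)
      exact (Iff.of_eq (congrArg
        (fun q => (relativize f).Realize (fun i => (a i : M)) q) h2)).symm.trans h1
    constructor
    · intro H s
      obtain ⟨i, rfl⟩ := ha s
      exact (key i).mp ((realize_substLast i _ _ _).mp (H i))
    · intro H i
      exact (realize_substLast i _ _ _).mpr ((key i).mpr (H (a i)))

/-- The sentence asserting that the set of values of `k` witnesses carries a
substructure satisfying `φ`. -/
noncomputable def relSentence (φ : L.Sentence) (k : ℕ) : L.Sentence :=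
  Language.Formula.iExs (Fin k) (Language.Formula.relabel (Sum.inr : Fin k → Empty ⊕ Fin k)
    (relativize (φ.relabel (Empty.elim : Empty → Fin k))))

theorem realize_relSentence {M : Type*} [L.Structure M] (φ : L.Sentence) (k : ℕ) :
    M ⊨ relSentence φ k ↔
      ∃ w : Fin k → M,
        (relativize (φ.relabel (Empty.elim : Empty → Fin k))).Realize w
          (default : Fin 0 → M) := by
  rw [Sentence.Realize, relSentence, Language.Formula.realize_iExs]
  simp only [Language.Formula.realize_relabel, Sum.elim_comp_inr]
  exact Iff.rfl

end ThetaAux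

open ThetaAux

theorem theta_expressible_of_no_models_of_card
    {L : FirstOrder.Language.{u, v}} [L.IsRelational] (φ : L.Sentence)
    (n : ℕ) (hn : 1 ≤ n)
    (h : ∀ (M : Type (max u v)) [L.Structure M], Nat.card M = n → M ⊨ φ) :
    ∃ χ : L.Sentence,
      ∀ (M : Type (max u v)) [L.Structure M] [Nonempty M],
        M ⊨ χ ↔ ∃ S : L.Substructure M, Nonempty S ∧ S ⊨ φ := by
  classical
  refine ⟨Sentence.cardGe L n ⊔
    BoundedFormula.iSup (fun k : Finset.Icc 1 n => relSentence φ k), ?_⟩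
  intro M _ _
  have e0 : ∀ (f g : Fin 0 → M), f = g := fun f g => funext fun j => j.elim0
  constructor
  · intro hχ
    rcases (BoundedFormula.realize_sup).mp hχ with hcard | hsup
    · -- M has at least n elements: take any n-element subset.
      have hle : (n : Cardinal) ≤ #M := (Sentence.realize_cardGe (L := L) (M := M) n).mp hcard
      obtain ⟨f⟩ : Nonempty (Fin n ↪ M) := by
        rw [← Cardinal.lift_mk_fin n, ← Cardinal.lift_id'.{0, max u v} #M] at hle
        exact Cardinal.lift_mk_le'.mp hle
      let S : L.Substructure M :=
        { carrier := Set.range f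
          fun_mem := fun F => isEmptyElim F }
      have e : Fin n ≃ S :=
        Equiv.ofBijective (fun i => ⟨f i, ⟨i, rfl⟩⟩)
          ⟨fun i j hij => f.injective (congrArg Subtype.val hij),
           by rintro ⟨x, i, rfl⟩; exact ⟨i, rfl⟩⟩
      have hcardS : Nat.card S = n := by
        rw [Nat.card_congr e.symm, Nat.card_eq_fintype_card, Fintype.card_fin]
      exact ⟨S, ⟨e ⟨0, hn⟩⟩, h S hcardS⟩
    · -- Some small subset carries a substructure satisfying φ.
      rw [BoundedFormula.realize_iSup] at hsup
      obtain ⟨⟨k, hk⟩, hksat⟩ := hsup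
      obtain ⟨w, hw⟩ := (realize_relSentence φ k).mp hksat
      let S : L.Substructure M :=
        { carrier := Set.range w
          fun_mem := fun F => isEmptyElim F }
      have hk1 : 1 ≤ k := (Finset.mem_Icc.mp hk).1
      let a : Fin k → S := fun i => ⟨w i, ⟨i, rfl⟩⟩
      have ha : Function.Surjective a := by rintro ⟨x, i, rfl⟩; exact ⟨i, rfl⟩
      have hrel := realize_relativize S a ha (φ.relabel (Empty.elim : Empty → Fin k))
        (default : Fin 0 → S)
      have hwa : (fun i => (a i : M)) = w := rfl
      rw [hwa] at hrel
      have h1 : (φ.relabel (Empty.elim : Empty → Fin k)).Realize a := by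
        refine hrel.mp ?_
        rw [e0 (fun j => ((default : Fin 0 → S) j : M)) default]
        exact hw
      rw [Language.Formula.realize_relabel] at h1
      refine ⟨S, ⟨a ⟨0, hk1⟩⟩, ?_⟩
      rw [Sentence.Realize]
      rw [show (default : Empty → S) = a ∘ Empty.elim from funext fun x => x.elim]
      exact h1
  · rintro ⟨S, hS, hSφ⟩
    refine BoundedFormula.realize_sup.mpr ?_
    rcases le_or_gt (n : Cardinal) (#M) with hle | hlt
    · exact Or.inl ((Sentence.realize_cardGe (L := L) (M := M) n).mpr hle)
    · right
      have hfinM : Finite M :=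
        Cardinal.lt_aleph0_iff_finite.mp (hlt.trans (Cardinal.nat_lt_aleph0 n))
      have hfinS : Finite S := Subtype.finite
      have hk1 : 1 ≤ Nat.card S :=
        Nat.one_le_iff_ne_zero.mpr (Nat.card_ne_zero.mpr ⟨hS, hfinS⟩)
      have hkn : Nat.card S ≤ n := by
        have h1 : (#S) ≤ #M := Cardinal.mk_le_of_injective Subtype.val_injective
        have h2 : (#S) < (n : Cardinal) := lt_of_le_of_lt h1 hlt
        have h3 := Cardinal.toNat_le_toNat h2.le (Cardinal.nat_lt_aleph0 n)
        simpa [Nat.card] using h3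
      have e : S ≃ Fin (Nat.card S) := Nat.equivFinOfCardPos (by omega)
      set k := Nat.card S with hkdef
      let a : Fin k → S := e.symm
      have ha : Function.Surjective a := e.symm.surjective
      refine BoundedFormula.realize_iSup.mpr ?_
      refine ⟨⟨k, Finset.mem_Icc.mpr ⟨hk1, hkn⟩⟩, ?_⟩
      refine (realize_relSentence φ k).mpr ⟨fun i => (a i : M), ?_⟩
      have h1 : (φ.relabel (Empty.elim : Empty → Fin k)).Realize a := by
        rw [Language.Formula.realize_relabel,
          show (a ∘ Empty.elim : Empty → S) = default from funext fun x => x.elim]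
        exact hSφ
      have hrel := realize_relativize S a ha (φ.relabel (Empty.elim : Empty → Fin k))
        (default : Fin 0 → S)
      rw [e0 (fun j => ((default : Fin 0 → S) j : M)) default] at hrel
      exact hrel.mpr h1
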